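/- Fix an integer r ≥ 0. With P_t := (1+3x+x^2)^t, Q_t := (2+3x+x^2)^t, R_t := (P_t − (1+x)^t)/x, U_t := (P_t + x·Q_t)^3 and V_t := (Q_t + R_t)^3 − R_t^3, there exist K ≥ 0, constants c, C > 0 and t_0 such that for all integers t ≥ t_0: c · t^{−K} · 2^{3t} ≤ [x^r] V_t ≤ C · t^K · 2^{3t}, and c · t^{−K} · 2^{min(r,3)·t} ≤ [x^r] U_t ≤ C · t^K · 2^{min(r,3)·t}. -/

import Mathlib

open Polynomial

/- ===== machinery ===== -/
def NN (f : Polynomial ℤ) : Prop := ∀ n, 0 ≤ f.coeff n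
def PLE (f g : Polynomial ℤ) : Prop := ∀ n, f.coeff n ≤ g.coeff n

lemma NN.mul {f g : Polynomial ℤ} (hf : NN f) (hg : NN g) : NN (f * g) := by
  intro n
  rw [coeff_mul]
  exact Finset.sum_nonneg fun p _ => mul_nonneg (hf _) (hg _)

lemma NN.pow {f : Polynomial ℤ} (hf : NN f) (k : ℕ) : NN (f ^ k) := by
  induction k with
  | zero => intro n; simp [coeff_one]; positivity
  | succ k ih => rw [pow_succ]; exact ih.mul hf

lemma PLE.mul {f g f' g' : Polynomial ℤ} (hf : NN f) (hg : NN g)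
    (h1 : PLE f f') (h2 : PLE g g') : PLE (f * g) (f' * g') := by
  intro n
  rw [coeff_mul, coeff_mul]
  refine Finset.sum_le_sum fun p _ => ?_
  exact mul_le_mul (h1 _) (h2 _) (hg _) (le_trans (hf _) (h1 _))

lemma PLE.pow {f g : Polynomial ℤ} (hf : NN f) (h : PLE f g) (k : ℕ) :
    PLE (f ^ k) (g ^ k) := by
  induction k with
  | zero => intro n; simp
  | succ k ih => rw [pow_succ, pow_succ]; exact PLE.mul (hf.pow k) hf ih h

lemma ple_trans_eq {f g h : Polynomial ℤ} (hle : PLE f g) (e : g = h) : PLE f h := e ▸ hle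
lemma eq_trans_ple {f g h : Polynomial ℤ} (e : f = g) (hle : PLE g h) : PLE f h := e ▸ hle

/- ===== base coefficient facts ===== -/
lemma coeff_p1 (n : ℕ) : (1 + 3*X + X^2 : Polynomial ℤ).coeff n =
    (if n = 0 then 1 else 0) + 3 * (if n = 1 then 1 else 0) + (if n = 2 then 1 else 0) := by
  have h : (1 + 3*X + X^2 : Polynomial ℤ) = C 1 + C 3 * X + C 1 * X^2 := by
    simp only [map_one, map_ofNat]; ring
  rw [h]
  simp only [coeff_add, coeff_C_mul, coeff_C, coeff_X, coeff_X_pow]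
  split_ifs <;> omega

lemma coeff_p2 (n : ℕ) : (2 + 3*X + X^2 : Polynomial ℤ).coeff n =
    2 * (if n = 0 then 1 else 0) + 3 * (if n = 1 then 1 else 0) + (if n = 2 then 1 else 0) := by
  have h : (2 + 3*X + X^2 : Polynomial ℤ) = C 2 + C 3 * X + C 1 * X^2 := by
    simp only [map_one, map_ofNat]; ring
  rw [h]
  simp only [coeff_add, coeff_C_mul, coeff_C, coeff_X, coeff_X_pow]
  split_ifs <;> omega

lemma nn_p1 : NN (1 + 3*X + X^2 : Polynomial ℤ) := by
  intro n; rw [coeff_p1]; split_ifs <;> norm_num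

lemma nn_p2 : NN (2 + 3*X + X^2 : Polynomial ℤ) := by
  intro n; rw [coeff_p2]; split_ifs <;> norm_num

lemma nn_B1 : NN ((1 + X : Polynomial ℤ)^1) := by
  intro n; rw [pow_one]
  simp only [coeff_add, coeff_one, coeff_X]
  split_ifs <;> norm_num

lemma nn_2B1 : NN (C 2 * (1 + X : Polynomial ℤ)^1) := by
  intro n; rw [pow_one, coeff_C_mul]
  simp only [coeff_add, coeff_one, coeff_X]
  split_ifs <;> norm_num

lemma ple_B_p1 : PLE ((1 + X : Polynomial ℤ)^1) (1 + 3*X + X^2 : Polynomial ℤ) := by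
  intro n; rw [coeff_p1, pow_one]
  simp only [coeff_add, coeff_one, coeff_X]
  split_ifs <;> omega

lemma ple_p1_B3 : PLE (1 + 3*X + X^2 : Polynomial ℤ) ((1 + X : Polynomial ℤ)^3) := by
  intro n; rw [coeff_p1, coeff_one_add_X_pow]
  rcases n with _|_|_|n <;> simp [Nat.choose]

lemma ple_2B_p2 : PLE (C 2 * (1 + X : Polynomial ℤ)^1) (2 + 3*X + X^2 : Polynomial ℤ) := by
  intro n; rw [coeff_p2, coeff_C_mul, pow_one]
  simp only [coeff_add, coeff_one, coeff_X]
  split_ifs <;> omega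

lemma ple_p2_2B2 : PLE (2 + 3*X + X^2 : Polynomial ℤ) (C 2 * (1 + X : Polynomial ℤ)^2) := by
  intro n; rw [coeff_p2, coeff_C_mul, coeff_one_add_X_pow]
  rcases n with _|_|_|n <;> simp [Nat.choose]

/- ===== generic coefficient bounds for C(2^a) * (1+X)^M ===== -/
lemma term_bound {g : Polynomial ℤ} {a M : ℕ}
    (hg : PLE g (C ((2:ℤ)^a) * (1 + X)^M)) (k r : ℕ) :
    (X^k * g).coeff r ≤ (2:ℤ)^a * (M:ℤ)^(r - k) := by
  rw [coeff_X_pow_mul']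
  split_ifs with h
  · refine le_trans (hg _) ?_
    rw [coeff_C_mul, coeff_one_add_X_pow]
    have : ((M.choose (r - k) : ℤ)) ≤ (M:ℤ)^(r-k) := by
      exact_mod_cast Nat.choose_le_pow M (r-k)
    nlinarith [pow_pos (by norm_num : (0:ℤ) < 2) a]
  · positivity

lemma term_low {g : Polynomial ℤ} {a M : ℕ}
    (hg : PLE (C ((2:ℤ)^a) * (1 + X)^M) g) (n : ℕ) (hn : n ≤ M) :
    (2:ℤ)^a ≤ g.coeff n := by
  refine le_trans ?_ (hg n)
  rw [coeff_C_mul, coeff_one_add_X_pow]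
  have h1 : (1:ℤ) ≤ (M.choose n : ℤ) := by exact_mod_cast Nat.choose_pos hn
  nlinarith [pow_pos (by norm_num : (0:ℤ) < 2) a]


/-- `P_t := (1+3x+x^2)^t`. -/
noncomputable def Ppoly (t : ℕ) : Polynomial ℤ := (1 + 3 * X + X ^ 2) ^ t

/-- `Q_t := (2+3x+x^2)^t`. -/
noncomputable def Qpoly (t : ℕ) : Polynomial ℤ := (2 + 3 * X + X ^ 2) ^ t

/-- `R_t := (P_t - (1+x)^t)/x`, a genuine polynomial since `P_t` and `(1+x)^t` have equal
constant terms (here realized as division by the monic polynomial `X`). -/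
noncomputable def Rpoly (t : ℕ) : Polynomial ℤ := (Ppoly t - (1 + X) ^ t) /ₘ X

/-- `U_t := (P_t + x·Q_t)^3`. -/
noncomputable def Upoly (t : ℕ) : Polynomial ℤ := (Ppoly t + X * Qpoly t) ^ 3

/-- `V_t := (Q_t + R_t)^3 - R_t^3`. -/
noncomputable def Vpoly (t : ℕ) : Polynomial ℤ := (Qpoly t + Rpoly t) ^ 3 - Rpoly t ^ 3

lemma nnP (t a : ℕ) : NN (Ppoly t ^ a) := by
  rw [Ppoly, ← pow_mul]; exact nn_p1.pow _

lemma nnQ (t a : ℕ) : NN (Qpoly t ^ a) := by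
  rw [Qpoly, ← pow_mul]; exact nn_p2.pow _

lemma hPle (t a : ℕ) : PLE (Ppoly t ^ a) ((1 + X : Polynomial ℤ)^(3*(t*a))) := by
  refine eq_trans_ple (by rw [Ppoly, ← pow_mul]) (ple_trans_eq (PLE.pow nn_p1 ple_p1_B3 (t*a)) ?_)
  rw [← pow_mul, mul_comm 3 (t*a)]

lemma hPlow (t a : ℕ) : PLE ((1 + X : Polynomial ℤ)^(t*a)) (Ppoly t ^ a) := by
  refine eq_trans_ple (g := ((1+X:Polynomial ℤ)^1)^(t*a)) (by rw [← pow_mul, one_mul]) ?_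
  exact ple_trans_eq (PLE.pow nn_B1 ple_B_p1 (t*a)) (by rw [Ppoly, ← pow_mul])

lemma hQle (t a : ℕ) : PLE (Qpoly t ^ a) (C ((2:ℤ)^(t*a)) * (1 + X : Polynomial ℤ)^(2*(t*a))) := by
  refine eq_trans_ple (by rw [Qpoly, ← pow_mul]) (ple_trans_eq (PLE.pow nn_p2 ple_p2_2B2 (t*a)) ?_)
  rw [mul_pow, ← C_pow, ← pow_mul, mul_comm 2 (t*a)]

lemma hQlow (t a : ℕ) : PLE (C ((2:ℤ)^(t*a)) * (1 + X : Polynomial ℤ)^(t*a)) (Qpoly t ^ a) := by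
  refine eq_trans_ple (g := (C 2 * (1+X:Polynomial ℤ)^1)^(t*a)) ?_ ?_
  · rw [mul_pow, ← C_pow, ← pow_mul, one_mul]
  · exact ple_trans_eq (PLE.pow nn_2B1 ple_2B_p2 (t*a)) (by rw [Qpoly, ← pow_mul])

lemma XR_eq (t : ℕ) : X * Rpoly t = Ppoly t - (1 + X) ^ t := by
  have hm := modByMonic_add_div (Ppoly t - (1 + X) ^ t) (X : Polynomial ℤ)
  have h0 : (Ppoly t - (1 + X) ^ t).eval 0 = 0 := by simp [Ppoly]
  rw [modByMonic_X, h0, map_zero, zero_add] at hm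
  rw [Rpoly]; exact hm

lemma nnW (t : ℕ) : NN (X * Rpoly t) := by
  intro n
  rw [XR_eq, coeff_sub, sub_nonneg]
  have := hPlow t 1 n
  rwa [mul_one, pow_one] at this

lemma hWle (t : ℕ) : PLE (X * Rpoly t) ((1 + X : Polynomial ℤ)^(3*t)) := by
  intro n
  rw [XR_eq, coeff_sub]
  have h1 := hPle t 1 n
  rw [mul_one, pow_one] at h1
  have h2 : (0:ℤ) ≤ ((1+X:Polynomial ℤ)^t).coeff n := nn_B1.pow t n |>.trans_eq (by rw [← pow_mul, one_mul])
  linarith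

lemma nnWpow (t a : ℕ) : NN ((X * Rpoly t) ^ a) := (nnW t).pow a

lemma hWple (t a : ℕ) : PLE ((X * Rpoly t) ^ a) ((1 + X : Polynomial ℤ)^(3*t*a)) :=
  ple_trans_eq (PLE.pow (nnW t) (hWle t) a) (by rw [← pow_mul])

lemma nnB (m : ℕ) : NN ((1 + X : Polynomial ℤ)^m) := by
  have := nn_B1.pow m; rwa [← pow_mul, one_mul] at this

lemma nnXpow (k : ℕ) : NN ((X : Polynomial ℤ)^k) := by
  intro n; rw [coeff_X_pow]; split_ifs <;> norm_num

lemma hPQle (t a b : ℕ) : PLE (Ppoly t ^ a * Qpoly t ^ b)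
    (C ((2:ℤ)^(t*b)) * (1 + X : Polynomial ℤ)^(3*(t*a) + 2*(t*b))) := by
  refine ple_trans_eq (PLE.mul (nnP t a) (nnQ t b) (hPle t a) (hQle t b)) ?_
  rw [pow_add]; ring

lemma hPQlow (t a b : ℕ) : PLE (C ((2:ℤ)^(t*b)) * (1 + X : Polynomial ℤ)^(t*a + t*b))
    (Ppoly t ^ a * Qpoly t ^ b) := by
  refine eq_trans_ple ?_ (PLE.mul (nnB (t*a)) (fun n => by
    rw [coeff_C_mul, coeff_one_add_X_pow]; positivity) (hPlow t a) (hQlow t b))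
  rw [pow_add]; ring

lemma hQWle (t a b : ℕ) : PLE (Qpoly t ^ a * (X * Rpoly t) ^ b)
    (C ((2:ℤ)^(t*a)) * (1 + X : Polynomial ℤ)^(2*(t*a) + 3*t*b)) := by
  refine ple_trans_eq (PLE.mul (nnQ t a) (nnWpow t b) (hQle t a) (hWple t b)) ?_
  rw [pow_add]; ring

lemma termU_le (t r k M : ℕ) (ht : 1 ≤ t) (hk : k ≤ 3) (hM : M ≤ 9*t)
    (g : Polynomial ℤ) (hg : PLE g (C ((2:ℤ)^(t*k)) * (1 + X)^M)) :
    (X^k * g).coeff r ≤ (2:ℤ)^(min r 3 * t) * (9*(t:ℤ))^r := by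
  by_cases hkr : k ≤ r
  · refine le_trans (term_bound hg k r) ?_
    have hkm : k ≤ min r 3 := le_min hkr hk
    have h2 : (2:ℤ)^(t*k) ≤ 2^(min r 3 * t) := by
      apply pow_le_pow_right₀ (by norm_num)
      calc t*k = k*t := mul_comm _ _
        _ ≤ min r 3 * t := Nat.mul_le_mul_right t hkm
    have h9 : ((M:ℤ))^(r-k) ≤ (9*(t:ℤ))^r := by
      calc ((M:ℤ))^(r-k) ≤ (9*(t:ℤ))^(r-k) := by
            apply pow_le_pow_left₀ (by positivity)
            exact_mod_cast hM
        _ ≤ (9*(t:ℤ))^r := by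
            apply pow_le_pow_right₀ (by exact_mod_cast Nat.one_le_iff_ne_zero.mpr (by positivity) ; )
            exact Nat.sub_le r k
    exact mul_le_mul h2 h9 (by positivity) (by positivity)
  · rw [coeff_X_pow_mul', if_neg hkr]
    positivity

lemma termV_le (t r2 k a M : ℕ) (ht : 1 ≤ t) (ha : a ≤ 3*t) (hM : M ≤ 8*t)
    (g : Polynomial ℤ) (hg : PLE g (C ((2:ℤ)^a) * (1 + X)^M)) :
    (X^k * g).coeff r2 ≤ (2:ℤ)^(3*t) * (8*(t:ℤ))^r2 := by
  refine le_trans (term_bound hg k r2) ?_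
  have h2 : (2:ℤ)^a ≤ 2^(3*t) := pow_le_pow_right₀ (by norm_num) ha
  have h8 : ((M:ℤ))^(r2-k) ≤ (8*(t:ℤ))^r2 := by
    calc ((M:ℤ))^(r2-k) ≤ (8*(t:ℤ))^(r2-k) := by
          apply pow_le_pow_left₀ (by positivity)
          exact_mod_cast hM
      _ ≤ (8*(t:ℤ))^r2 := by
          apply pow_le_pow_right₀ (by exact_mod_cast Nat.one_le_iff_ne_zero.mpr (by positivity))
          exact Nat.sub_le r2 k
  exact mul_le_mul h2 h8 (by positivity) (by positivity)

lemma U_bounds (r t : ℕ) (ht : r + 1 ≤ t) :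
    (2:ℤ)^(min r 3 * t) ≤ (Upoly t).coeff r ∧
      (Upoly t).coeff r ≤ 8 * 9^(r+2) * (t:ℤ)^(r+2) * 2^(min r 3 * t) := by
  have ht1 : 1 ≤ t := le_trans (Nat.le_add_left 1 r) ht
  set P := Ppoly t with hP
  set Q := Qpoly t with hQ
  have hU : Upoly t = X^0 * (P^3 * Q^0) + C 3 * (X^1 * (P^2 * Q^1)) +
      C 3 * (X^2 * (P^1 * Q^2)) + X^3 * (P^0 * Q^3) := by
    rw [Upoly]; simp only [map_ofNat]; ring
  have hc : (Upoly t).coeff r = (X^0 * (P^3 * Q^0)).coeff r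
      + 3 * (X^1 * (P^2 * Q^1)).coeff r + 3 * (X^2 * (P^1 * Q^2)).coeff r
      + (X^3 * (P^0 * Q^3)).coeff r := by
    rw [hU]; simp only [coeff_add, coeff_C_mul]
  have hT : ∀ k a b : ℕ, 0 ≤ ((X:Polynomial ℤ)^k * (P^a * Q^b)).coeff r :=
    fun k a b => (NN.mul (nnXpow k) (NN.mul (nnP t a) (nnQ t b))) r
  constructor
  · -- lower bound
    rw [hc]
    have n0 := hT 0 3 0; have n1 := hT 1 2 1; have n2 := hT 2 1 2; have n3 := hT 3 0 3
    rcases lt_or_ge r 3 with hr3 | hr3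
    · interval_cases r
      · -- r = 0
        have h0 : (1:ℤ) ≤ ((X:Polynomial ℤ)^0*(P^3*Q^0)).coeff 0 := by
          rw [pow_zero, one_mul]
          have h := term_low (hPQlow t 3 0) 0 (Nat.zero_le _)
          simpa using h
        have e : (2:ℤ)^(min 0 3 * t) = 1 := by norm_num
        rw [e]; linarith
      · -- r = 1
        have h1 : (2:ℤ)^(t*1) ≤ ((X:Polynomial ℤ)^1*(P^2*Q^1)).coeff 1 := by
          have e : ((X:Polynomial ℤ)^1*(P^2*Q^1)).coeff 1 = (P^2*Q^1).coeff 0 :=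
            coeff_X_pow_mul (P^2*Q^1) 1 0
          rw [e]; exact term_low (hPQlow t 2 1) 0 (Nat.zero_le _)
        have e2 : min 1 3 * t = t*1 := by norm_num [mul_comm]
        rw [e2]
        have hp : (0:ℤ) ≤ 2^(t*1) := by positivity
        linarith
      · -- r = 2
        have h1 : (2:ℤ)^(t*2) ≤ ((X:Polynomial ℤ)^2*(P^1*Q^2)).coeff 2 := by
          have e : ((X:Polynomial ℤ)^2*(P^1*Q^2)).coeff 2 = (P^1*Q^2).coeff 0 :=
            coeff_X_pow_mul (P^1*Q^2) 2 0
          rw [e]; exact term_low (hPQlow t 1 2) 0 (Nat.zero_le _)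
        have e2 : min 2 3 * t = t*2 := by norm_num [mul_comm]
        rw [e2]
        have hp : (0:ℤ) ≤ 2^(t*2) := by positivity
        linarith
    · -- r ≥ 3
      obtain ⟨s, rfl⟩ : ∃ s, r = s + 3 := ⟨r - 3, by omega⟩
      have h1 : (2:ℤ)^(t*3) ≤ ((X:Polynomial ℤ)^3*(P^0*Q^3)).coeff (s+3) := by
        have e : ((X:Polynomial ℤ)^3*(P^0*Q^3)).coeff (s+3) = (P^0*Q^3).coeff s :=
          coeff_X_pow_mul (P^0*Q^3) 3 s
        rw [e]; exact term_low (hPQlow t 0 3) s (by omega)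
      have e2 : min (s+3) 3 * t = t*3 := by
        rw [min_eq_right (by omega), mul_comm]
      rw [e2]
      have hp : (0:ℤ) ≤ 2^(t*3) := by positivity
      linarith
  · -- upper bound
    have hb0 := termU_le t r 0 (3*(t*3) + 2*(t*0)) ht1 (by norm_num) (by nlinarith)
      _ (hPQle t 3 0)
    have hb1 := termU_le t r 1 (3*(t*2) + 2*(t*1)) ht1 (by norm_num) (by nlinarith)
      _ (hPQle t 2 1)
    have hb2 := termU_le t r 2 (3*(t*1) + 2*(t*2)) ht1 (by norm_num) (by nlinarith)
      _ (hPQle t 1 2)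
    have hb3 := termU_le t r 3 (3*(t*0) + 2*(t*3)) ht1 (by norm_num) (by nlinarith)
      _ (hPQle t 0 3)
    rw [hc]
    have hsum : (X^0*(P^3*Q^0)).coeff r + 3*(X^1*(P^2*Q^1)).coeff r
        + 3*(X^2*(P^1*Q^2)).coeff r + (X^3*(P^0*Q^3)).coeff r
        ≤ 8 * ((2:ℤ)^(min r 3 * t) * (9*(t:ℤ))^r) := by linarith
    refine le_trans hsum ?_
    have h9 : (9*(t:ℤ))^r ≤ 9^(r+2) * (t:ℤ)^(r+2) := by
      rw [mul_pow]
      have h1 : (9:ℤ)^r ≤ 9^(r+2) := pow_le_pow_right₀ (by norm_num) (by omega)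
      have h2 : ((t:ℤ))^r ≤ (t:ℤ)^(r+2) :=
        pow_le_pow_right₀ (by exact_mod_cast ht1) (by omega)
      have h3 : (0:ℤ) ≤ (t:ℤ)^r := by positivity
      nlinarith [pow_nonneg (show (0:ℤ) ≤ 9 by norm_num) (r+2)]
    have h2p : (0:ℤ) ≤ 2^(min r 3 * t) := by positivity
    calc 8 * ((2:ℤ)^(min r 3 * t) * (9*(t:ℤ))^r)
        = 8 * (9*(t:ℤ))^r * 2^(min r 3 * t) := by ring
      _ ≤ 8 * (9^(r+2) * (t:ℤ)^(r+2)) * 2^(min r 3 * t) := by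
          apply mul_le_mul_of_nonneg_right _ h2p
          linarith
      _ = 8 * 9^(r+2) * (t:ℤ)^(r+2) * 2^(min r 3 * t) := by ring

lemma V_bounds (r t : ℕ) (ht : r + 1 ≤ t) :
    (2:ℤ)^(3*t) ≤ (Vpoly t).coeff r ∧
      (Vpoly t).coeff r ≤ 8 * 9^(r+2) * (t:ℤ)^(r+2) * 2^(3*t) := by
  have ht1 : 1 ≤ t := le_trans (Nat.le_add_left 1 r) ht
  set Q := Qpoly t with hQ
  set R := Rpoly t with hR
  have hV : X^2 * Vpoly t = X^2 * (Q^3 * (X*R)^0) + C 3 * (X^1 * (Q^2 * (X*R)^1)) +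
      C 3 * (X^0 * (Q^1 * (X*R)^2)) := by
    rw [Vpoly]; simp only [map_ofNat]; ring
  have hcoeff : (Vpoly t).coeff r = (X^2 * Vpoly t).coeff (r+2) :=
    (coeff_X_pow_mul (Vpoly t) 2 r).symm
  have hc : (Vpoly t).coeff r = (X^2 * (Q^3 * (X*R)^0)).coeff (r+2)
      + 3 * (X^1 * (Q^2 * (X*R)^1)).coeff (r+2) + 3 * (X^0 * (Q^1 * (X*R)^2)).coeff (r+2) := by
    rw [hcoeff, hV]; simp only [coeff_add, coeff_C_mul]
  have hT : ∀ k a b : ℕ, 0 ≤ ((X:Polynomial ℤ)^k * (Q^a * (X*R)^b)).coeff (r+2) :=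
    fun k a b => (NN.mul (nnXpow k) (NN.mul (nnQ t a) (nnWpow t b))) (r+2)
  constructor
  · -- lower bound
    rw [hc]
    have n1 := hT 1 2 1; have n0 := hT 0 1 2
    have h2 : (2:ℤ)^(t*3) ≤ ((X:Polynomial ℤ)^2 * (Q^3 * (X*R)^0)).coeff (r+2) := by
      have e : ((X:Polynomial ℤ)^2 * (Q^3 * (X*R)^0)).coeff (r+2) = (Q^3 * (X*R)^0).coeff r :=
        coeff_X_pow_mul _ 2 r
      have e2 : Q^3 * (X*R)^0 = Q^3 := by rw [pow_zero, mul_one]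
      rw [e, e2]
      exact term_low (hQlow t 3) r (by omega)
    have e3 : 3*t = t*3 := mul_comm _ _
    rw [e3]
    have hp : (0:ℤ) ≤ 2^(t*3) := by positivity
    linarith
  · -- upper bound
    have hb2 := termV_le t (r+2) 2 (t*3) (2*(t*3) + 3*t*0) ht1 (by omega) (by omega)
      _ (hQWle t 3 0)
    have hb1 := termV_le t (r+2) 1 (t*2) (2*(t*2) + 3*t*1) ht1 (by omega) (by omega)
      _ (hQWle t 2 1)
    have hb0 := termV_le t (r+2) 0 (t*1) (2*(t*1) + 3*t*2) ht1 (by omega) (by omega)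
      _ (hQWle t 1 2)
    rw [hc]
    have hsum : (X^2 * (Q^3 * (X*R)^0)).coeff (r+2)
        + 3 * (X^1 * (Q^2 * (X*R)^1)).coeff (r+2) + 3 * (X^0 * (Q^1 * (X*R)^2)).coeff (r+2)
        ≤ 7 * ((2:ℤ)^(3*t) * (8*(t:ℤ))^(r+2)) := by linarith
    refine le_trans hsum ?_
    have h89 : (8:ℤ)^(r+2) ≤ 9^(r+2) := pow_le_pow_left₀ (by norm_num) (by norm_num) _
    have h8p : (0:ℤ) ≤ (8:ℤ)^(r+2) := by positivity
    have htp : (0:ℤ) ≤ (t:ℤ)^(r+2) := by positivity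
    have h2p : (0:ℤ) ≤ (2:ℤ)^(3*t) := by positivity
    calc 7 * ((2:ℤ)^(3*t) * (8*(t:ℤ))^(r+2))
        = (7 * 8^(r+2)) * ((t:ℤ)^(r+2) * 2^(3*t)) := by rw [mul_pow]; ring
      _ ≤ (8 * 9^(r+2)) * ((t:ℤ)^(r+2) * 2^(3*t)) := by
          apply mul_le_mul_of_nonneg_right (by linarith) (by positivity)
      _ = 8 * 9^(r+2) * (t:ℤ)^(r+2) * 2^(3*t) := by ring

/-- For fixed `r ≥ 0`: `[x^r] V_t = 2^{3t} t^{O(1)}` and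
`[x^r] U_t = 2^{min(r,3) t} t^{O(1)}`.  Explicitly, there exist `K ≥ 0`, `c, C > 0` and
`t_0` such that for all `t ≥ t_0`,
`c t^{-K} 2^{3t} ≤ [x^r] V_t ≤ C t^K 2^{3t}` and
`c t^{-K} 2^{min(r,3)t} ≤ [x^r] U_t ≤ C t^K 2^{min(r,3)t}`. -/
theorem coeff_U_V_growth (r : ℕ) :
    ∃ (K : ℕ) (c C : ℝ), 0 < c ∧ 0 < C ∧ ∃ t0 : ℕ, ∀ t : ℕ, t0 ≤ t →
      (c * 2 ^ (3 * t) / (t : ℝ) ^ K ≤ ((Vpoly t).coeff r : ℝ) ∧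
        ((Vpoly t).coeff r : ℝ) ≤ C * (t : ℝ) ^ K * 2 ^ (3 * t)) ∧
      (c * 2 ^ (min r 3 * t) / (t : ℝ) ^ K ≤ ((Upoly t).coeff r : ℝ) ∧
        ((Upoly t).coeff r : ℝ) ≤ C * (t : ℝ) ^ K * 2 ^ (min r 3 * t)) := by
  refine ⟨r+2, 1, 8 * 9^(r+2), one_pos, by positivity, r+1, fun t ht => ?_⟩
  have ht1 : (1:ℝ) ≤ (t:ℝ) := by exact_mod_cast le_trans (Nat.le_add_left 1 r) ht
  have htK : (1:ℝ) ≤ (t:ℝ)^(r+2) := one_le_pow₀ ht1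
  obtain ⟨hVlo, hVhi⟩ := V_bounds r t ht
  obtain ⟨hUlo, hUhi⟩ := U_bounds r t ht
  refine ⟨⟨?_, ?_⟩, ?_, ?_⟩
  · have h1 : (1:ℝ) * 2^(3*t) / (t:ℝ)^(r+2) ≤ 2^(3*t) := by
      rw [one_mul]; exact div_le_self (by positivity) htK
    refine h1.trans ?_
    exact_mod_cast hVlo
  · exact_mod_cast hVhi
  · have h1 : (1:ℝ) * 2^(min r 3 * t) / (t:ℝ)^(r+2) ≤ 2^(min r 3 * t) := by
      rw [one_mul]; exact div_le_self (by positivity) htK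
    refine h1.trans ?_
    exact_mod_cast hUlo
  · exact_mod_cast hUhi
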